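/- For every z in the open unit disk 𝔻, the Hankel operator with symbol φ̄_z (the complex conjugate of the Möbius transform φ_z) satisfies H_{φ̄_z} = −(k_{z̄} ⊗ k_z) on the Hardy space H², where z̄ is the complex conjugate of z. -/

import Mathlib

open MeasureTheory Complex Metric InnerProductSpace
open scoped ENNReal ComplexConjugate

noncomputable section

namespace HTpaper

instance fact2pi : Fact (0 < 2 * Real.pi) := ⟨by positivity⟩

/-- The unit circle `∂𝔻`, modelled additively as `ℝ / 2πℤ`; the point `x` corresponds to
`e^{ix} ∈ ∂𝔻`.  In particular the coordinate function `z` is `fourier 1`, and the conjugation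
map `z ↦ z̄` of the circle is `x ↦ -x`. -/
abbrev 𝕋 : Type := AddCircle (2 * Real.pi)

/-- Normalized Lebesgue (Haar) measure on the circle. -/
abbrev μT : Measure 𝕋 := AddCircle.haarAddCircle

/-- The Lebesgue space `L²(∂𝔻)`. -/
abbrev L2 : Type := Lp ℂ 2 μT

/-- The Hardy space `H²`: the closed subspace of `L²` of functions whose Fourier
coefficients of negative index vanish, realized as the orthogonal complement of the
span of the Fourier modes `e^{inx}`, `n < 0`. -/
def Hardy : Submodule ℂ L2 :=
  (Submodule.span ℂ {v : L2 | ∃ n : ℤ, n < 0 ∧ v = fourierBasis n})ᗮ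

instance : CompleteSpace Hardy := (Submodule.isClosed_orthogonal _).completeSpace_coe

/-- The orthogonal projection `P : L² → H²`. -/
def P : L2 →L[ℂ] Hardy := Hardy.orthogonalProjectionOnto

/-- The inclusion `H² ⊆ L²`. -/
def ι : Hardy →L[ℂ] L2 := Hardy.subtypeL

lemma memLp_smul {f : 𝕋 → ℂ} (hf : MemLp f ⊤ μT) (h : L2) :
    MemLp (f • (h : 𝕋 → ℂ)) 2 μT :=
  (Lp.memLp h).smul hf

open Classical in
/-- The multiplication operator `h ↦ f·h` on `L²`, for `f ∈ L^∞` (junk value `0` if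
`f ∉ L^∞`). -/
def mul (f : 𝕋 → ℂ) : L2 →L[ℂ] L2 :=
  if hf : MemLp f ⊤ μT then
    LinearMap.mkContinuous
      { toFun := fun h => (memLp_smul hf h).toLp (f • (h : 𝕋 → ℂ))
        map_add' := fun h₁ h₂ => by
          rw [← MemLp.toLp_add]
          apply MemLp.toLp_congr
          filter_upwards [Lp.coeFn_add h₁ h₂] with x hx
          simp only [Pi.smul_apply, smul_eq_mul, hx, Pi.add_apply, Pi.mul_apply]
          ring
        map_smul' := fun c h => by
          simp only [RingHom.id_apply]
          rw [← MemLp.toLp_const_smul]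
          apply MemLp.toLp_congr
          filter_upwards [Lp.coeFn_smul c h] with x hx
          simp only [Pi.smul_apply, smul_eq_mul, hx, Pi.mul_apply]
          ring }
      (eLpNorm f ⊤ μT).toReal
      (fun h => by
        simp only [LinearMap.coe_mk, AddHom.coe_mk]
        rw [Lp.norm_toLp]
        calc (eLpNorm (f • (h : 𝕋 → ℂ)) 2 μT).toReal
            ≤ (eLpNorm f ⊤ μT * eLpNorm (h : 𝕋 → ℂ) 2 μT).toReal := by
              apply ENNReal.toReal_mono
              · exact ENNReal.mul_ne_top hf.eLpNorm_ne_top (Lp.memLp h).eLpNorm_ne_top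
              · exact eLpNorm_smul_le_eLpNorm_top_mul_eLpNorm 2 (Lp.aestronglyMeasurable h) f
          _ = (eLpNorm f ⊤ μT).toReal * ‖h‖ := by
              rw [ENNReal.toReal_mul, Lp.norm_def])
  else 0

lemma negMP : MeasurePreserving (Neg.neg : 𝕋 → 𝕋) μT μT :=
  Measure.measurePreserving_neg μT

lemma memLp_compNeg (h : L2) : MemLp ((h : 𝕋 → ℂ) ∘ (Neg.neg : 𝕋 → 𝕋)) 2 μT :=
  (Lp.memLp h).comp_measurePreserving negMP

/-- The composition operator `h ↦ (x ↦ h (-x))` on `L²`, i.e. `h(z) ↦ h(z̄)`. -/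
def compNeg : L2 →L[ℂ] L2 :=
  LinearMap.mkContinuous
    { toFun := fun h => (memLp_compNeg h).toLp ((h : 𝕋 → ℂ) ∘ (Neg.neg : 𝕋 → 𝕋))
      map_add' := fun h₁ h₂ => by
        rw [← MemLp.toLp_add]
        apply MemLp.toLp_congr
        filter_upwards [negMP.quasiMeasurePreserving.ae_eq_comp (Lp.coeFn_add h₁ h₂)] with x hx
        simpa using hx
      map_smul' := fun c h => by
        simp only [RingHom.id_apply]
        rw [← MemLp.toLp_const_smul]
        apply MemLp.toLp_congr
        filter_upwards [negMP.quasiMeasurePreserving.ae_eq_comp (Lp.coeFn_smul c h)] with x hx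
        simpa using hx }
    1
    (fun h => by
      simp only [LinearMap.coe_mk, AddHom.coe_mk, one_mul]
      rw [Lp.norm_toLp, eLpNorm_comp_measurePreserving (Lp.aestronglyMeasurable h) negMP,
        Lp.norm_def])

/-- The unitary operator `U : L² → L²`, `(Uh)(z) = z̄·h(z̄)`; on the additive circle,
`(Uh)(x) = e^{-ix}·h(-x)`. -/
def Uop : L2 →L[ℂ] L2 := (mul fun x => fourier (-1) x) ∘L compNeg

/-- The Toeplitz operator `T_f = P ∘ M_f : H² → H²` with symbol `f`. -/
def Toeplitz (f : 𝕋 → ℂ) : Hardy →L[ℂ] Hardy := P ∘L (mul f) ∘L ι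

/-- The Hankel operator `H_f = P ∘ U ∘ M_f : H² → H²` with symbol `f`. -/
def Hankel (f : 𝕋 → ℂ) : Hardy →L[ℂ] Hardy := P ∘L Uop ∘L (mul f) ∘L ι

/-- The rank-one operator `x ⊗ y : h ↦ ⟨h, y⟩·x` on `H²`. -/
def rankOne (x y : Hardy) : Hardy →L[ℂ] Hardy := (innerSL ℂ y).smulRight x

/-- `f̃(z) = f(z̄)`. -/
def tilde (f : 𝕋 → ℂ) : 𝕋 → ℂ := fun x => f (-x)

/-- `f̄(z) = conj (f z)`, the complex conjugate of `f`. -/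
def conjF (f : 𝕋 → ℂ) : 𝕋 → ℂ := fun x => conj (f x)

/-- `f*(z) = conj (f (z̄))`. -/
def starF (f : 𝕋 → ℂ) : 𝕋 → ℂ := fun x => conj (f (-x))

/-- The open unit disk `𝔻 ⊆ ℂ`. -/
abbrev unitDisk : Set ℂ := Metric.ball (0 : ℂ) 1

lemma norm_lt_one (z : unitDisk) : ‖(z : ℂ)‖ < 1 := mem_ball_zero_iff.mp z.2

/-- `z̄`, as a point of the unit disk. -/
def conjD (z : unitDisk) : unitDisk :=
  ⟨conj (z : ℂ), by rw [mem_ball_zero_iff, RCLike.norm_conj]; exact norm_lt_one z⟩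

lemma norm_fourier_one (x : 𝕋) : ‖fourier 1 x‖ = 1 := by
  rw [fourier_apply]; exact Circle.norm_coe _

lemma denom_ne_zero (z : unitDisk) (x : 𝕋) : (1 : ℂ) - conj (z : ℂ) * fourier 1 x ≠ 0 := by
  intro h
  have h1 : (1 : ℂ) = conj (z : ℂ) * fourier 1 x := sub_eq_zero.mp h
  have h2 : (1 : ℝ) = ‖conj (z : ℂ)‖ * ‖fourier 1 x‖ := by
    rw [← norm_mul, ← h1, norm_one]
  rw [RCLike.norm_conj, norm_fourier_one, mul_one] at h2
  exact absurd h2.symm (ne_of_lt (norm_lt_one z))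

/-- The reproducing-kernel function `w ↦ √(1−|z|²)/(1−z̄w)` on the circle (`w = e^{ix}`). -/
def kernelCM (z : unitDisk) : C(𝕋, ℂ) :=
  ⟨fun x => (Real.sqrt (1 - ‖(z : ℂ)‖ ^ 2) : ℂ) / (1 - conj (z : ℂ) * fourier 1 x),
    (continuous_const.div (continuous_const.sub (continuous_const.mul (fourier 1).continuous))
      (denom_ne_zero z))⟩

/-- The normalized reproducing kernel `k_z ∈ H²` for `z ∈ 𝔻`.  (The function `kernelCM z`
belongs to the Hardy space, so the projection `P` fixes it.) -/
def kernel (z : unitDisk) : Hardy := P (ContinuousMap.toLp (E := ℂ) 2 μT ℂ (kernelCM z))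

/-- The Möbius transform `φ_z(w) = (z−w)/(1−z̄w)`, as a function on the circle. -/
def mobius (z : unitDisk) : 𝕋 → ℂ :=
  fun x => ((z : ℂ) - fourier 1 x) / (1 - conj (z : ℂ) * fourier 1 x)

/-- The filter on the unit disk expressing `|z| → 1⁻`. -/
def toBoundary : Filter unitDisk :=
  Filter.comap (fun z : unitDisk => ‖(z : ℂ)‖) (nhdsWithin 1 (Set.Iio 1))

lemma memLp_starL2 (h : L2) : MemLp (fun x => conj ((h : 𝕋 → ℂ) (-x))) 2 μT :=
  ⟨Complex.continuous_conj.comp_aestronglyMeasurable (memLp_compNeg h).1,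
    by
      rw [eLpNorm_congr_norm_ae (Filter.Eventually.of_forall fun x => RCLike.norm_conj _)]
      exact (memLp_compNeg h).2⟩

/-- The map `h ↦ h*`, `h*(z) = conj (h(z̄))`, on `L²`. -/
def starL2 (h : L2) : L2 := (memLp_starL2 h).toLp _

/-- The space `H^∞` of bounded analytic functions: bounded measurable functions on the
circle whose Fourier coefficients of negative index vanish. -/
def HinfSet : Set (𝕋 → ℂ) :=
  {f | MemLp f ⊤ μT ∧ ∀ n : ℤ, n < 0 → fourierCoeff f n = 0}

/-- `H^∞ + C`: functions that agree a.e. with the sum of an `H^∞` function and a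
continuous function. -/
def HinfPlusC : Set (𝕋 → ℂ) :=
  {f | ∃ h c : 𝕋 → ℂ, h ∈ HinfSet ∧ Continuous c ∧ f =ᵐ[μT] h + c}

/-- The property of being a closed subalgebra of `L^∞` containing `H^∞` and the set `s`
(at the level of functions; "closed" is with respect to the essential-sup norm, and the
defining predicates are invariant under a.e. modification). -/
structure IsClosedSubalgebraContaining (s A : Set (𝕋 → ℂ)) : Prop where
  mem_Linf : ∀ f ∈ A, MemLp f ⊤ μT
  add_mem : ∀ f ∈ A, ∀ g ∈ A, f + g ∈ A
  mul_mem : ∀ f ∈ A, ∀ g ∈ A, f * g ∈ A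
  smul_mem : ∀ (c : ℂ), ∀ f ∈ A, c • f ∈ A
  closed : ∀ f : 𝕋 → ℂ, MemLp f ⊤ μT →
    (∀ ε : ℝ≥0∞, 0 < ε → ∃ g ∈ A, eLpNorm (f - g) ⊤ μT < ε) → f ∈ A
  hinf_subset : HinfSet ⊆ A
  gen_subset : s ⊆ A

/-- `H^∞[s]`: the smallest closed subalgebra of `L^∞` containing `H^∞` and `s`. -/
def HinfAdjoin (s : Set (𝕋 → ℂ)) : Set (𝕋 → ℂ) :=
  ⋂₀ {A | IsClosedSubalgebraContaining s A}

-- Auxiliary lemmas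

lemma basis_coeff (n k : ℤ) :
    fourierCoeff ((fourierBasis n : L2) : 𝕋 → ℂ) k = if k = n then 1 else 0 := by
  classical
  rw [← fourierBasis_repr, fourierBasis.repr_self, lp.single_apply]
  simp [Pi.single_apply]

lemma mem_Hardy_iff {v : L2} :
    v ∈ Hardy ↔ ∀ n : ℤ, n < 0 → fourierCoeff (v : 𝕋 → ℂ) n = 0 := by
  constructor
  · intro hv n hn
    rw [← fourierBasis_repr, fourierBasis.repr_apply_apply]
    exact hv _ (Submodule.subset_span ⟨n, hn, rfl⟩)
  · intro H
    rw [Hardy, Submodule.mem_orthogonal]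
    intro u hu
    induction hu using Submodule.span_induction with
    | mem x hx =>
        obtain ⟨n, hn, rfl⟩ := hx
        rw [← fourierBasis.repr_apply_apply, fourierBasis_repr]
        exact H n hn
    | zero => simp
    | add x y _ _ hx hy => rw [inner_add_left, hx, hy, add_zero]
    | smul c x _ hx => rw [inner_smul_left, hx, mul_zero]

lemma hardy_coeff_eq_zero (h : Hardy) {n : ℤ} (hn : n < 0) :
    fourierCoeff ((h : L2) : 𝕋 → ℂ) n = 0 :=
  mem_Hardy_iff.mp h.2 n hn

lemma basis_mem_Hardy {m : ℤ} (hm : 0 ≤ m) : (fourierBasis m : L2) ∈ Hardy := by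
  rw [mem_Hardy_iff]
  intro n hn
  rw [basis_coeff]
  simp [show n ≠ m by omega]

lemma coeff_P_eq {g : L2} {m : ℤ} (hm : 0 ≤ m) :
    fourierCoeff ((ι (P g) : L2) : 𝕋 → ℂ) m = fourierCoeff (g : 𝕋 → ℂ) m := by
  have horth : g - ι (P g) ∈ Hardyᗮ := Hardy.sub_starProjection_mem_orthogonal g
  have h0 : inner ℂ ((fourierBasis m : L2)) (g - ι (P g)) = (0 : ℂ) :=
    Submodule.inner_right_of_mem_orthogonal (basis_mem_Hardy hm) horth
  rw [inner_sub_right, sub_eq_zero] at h0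
  rw [← fourierBasis_repr, fourierBasis.repr_apply_apply, ← h0,
    ← fourierBasis.repr_apply_apply, fourierBasis_repr]

lemma hardy_ext {a b : Hardy}
    (H : ∀ m : ℤ, fourierCoeff ((a : L2) : 𝕋 → ℂ) m = fourierCoeff ((b : L2) : 𝕋 → ℂ) m) :
    a = b := by
  apply Subtype.ext
  apply fourierBasis.repr.injective
  apply lp.ext
  funext m
  rw [fourierBasis_repr, fourierBasis_repr]
  exact H m

lemma fourierCoeff_congr_ae {f g : 𝕋 → ℂ} (h : f =ᵐ[μT] g) (n : ℤ) :
    fourierCoeff f n = fourierCoeff g n := by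
  unfold fourierCoeff
  apply integral_congr_ae
  filter_upwards [h] with x hx
  rw [hx]

lemma fourierCoeff_fourier (j k : ℤ) :
    fourierCoeff ((fourier j : C(𝕋, ℂ)) : 𝕋 → ℂ) k = if k = j then 1 else 0 := by
  rw [← basis_coeff j k]
  apply fourierCoeff_congr_ae
  have := coeFn_fourierLp (T := 2 * Real.pi) 2 j
  rw [← coe_fourierBasis] at this
  exact this.symm

lemma cont_integrable {f : 𝕋 → ℂ} (hf : Continuous f) : Integrable f μT :=
  hf.integrable_of_hasCompactSupport (HasCompactSupport.of_compactSpace _)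

lemma one_sub_mul_fourier_ne_zero {a : ℂ} (ha : ‖a‖ < 1) (x : 𝕋) :
    (1 : ℂ) - a * fourier 1 x ≠ 0 := by
  intro h
  have h1 : (1 : ℂ) = a * fourier 1 x := sub_eq_zero.mp h
  have h2 : (1 : ℝ) = ‖a‖ * ‖fourier 1 x‖ := by rw [← norm_mul, ← h1, norm_one]
  rw [norm_fourier_one, mul_one] at h2
  exact absurd h2.symm (ne_of_lt ha)

lemma continuous_geom {a : ℂ} (ha : ‖a‖ < 1) :
    Continuous fun x : 𝕋 => ((1 : ℂ) - a * fourier 1 x)⁻¹ :=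
  ((continuous_const.sub (continuous_const.mul (fourier 1).continuous)).inv₀
    (one_sub_mul_fourier_ne_zero ha))

lemma norm_geom_le {a : ℂ} (ha : ‖a‖ < 1) (x : 𝕋) :
    ‖((1 : ℂ) - a * fourier 1 x)⁻¹‖ ≤ (1 - ‖a‖)⁻¹ := by
  rw [norm_inv]
  apply inv_anti₀ (by linarith)
  calc 1 - ‖a‖ = ‖(1:ℂ)‖ - ‖a * fourier 1 x‖ := by
        rw [norm_one, norm_mul, norm_fourier_one, mul_one]
    _ ≤ ‖(1:ℂ) - a * fourier 1 x‖ := norm_sub_norm_le _ _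

lemma norm_fourier_one'' (n : ℤ) (x : 𝕋) : ‖fourier n x‖ = 1 := by
  rw [fourier_apply]; exact Circle.norm_coe _

lemma norm_fourierCoeff_le {f : 𝕋 → ℂ} {C : ℝ} (hC : ∀ x, ‖f x‖ ≤ C) (n : ℤ) :
    ‖fourierCoeff f n‖ ≤ C := by
  unfold fourierCoeff
  have : ‖∫ t : 𝕋, fourier (-n) t • f t ∂μT‖ ≤ C * (μT Set.univ).toReal := by
    apply norm_integral_le_of_norm_le_const
    filter_upwards with x
    rw [norm_smul, norm_fourier_one'']
    · simpa using hC x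
  simpa using this

lemma fourier_one_pow (j : ℕ) (x : 𝕋) : (fourier 1 x) ^ j = fourier (j : ℤ) x := by
  induction j with
  | zero => simp [fourier_zero]
  | succ n ih => rw [pow_succ, ih, ← fourier_add]; norm_num [add_comm]
lemma fourierCoeff_geom {a : ℂ} (ha : ‖a‖ < 1) (k : ℤ) :
    fourierCoeff (fun x : 𝕋 => ((1 : ℂ) - a * fourier 1 x)⁻¹) k
      = if 0 ≤ k then a ^ k.toNat else 0 := by
  set G : 𝕋 → ℂ := fun x => ((1 : ℂ) - a * fourier 1 x)⁻¹ with hG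
  have hGcont : Continuous G := continuous_geom ha
  have hGx : ∀ (N : ℕ) (x : 𝕋), G x =
      (∑ j ∈ Finset.range (N + 1), a ^ j * fourier (j : ℤ) x)
        + a ^ (N + 1) * (fourier ((N : ℤ) + 1) x * G x) := by
    intro N x
    have hden := one_sub_mul_fourier_ne_zero ha x
    have hinv : G x * (1 - a * fourier 1 x) = 1 := inv_mul_cancel₀ hden
    have hw : ∀ j : ℕ, a ^ j * fourier (j : ℤ) x = (a * fourier 1 x) ^ j := by
      intro j; rw [mul_pow, fourier_one_pow]
    apply mul_right_cancel₀ hden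
    rw [hinv]
    have hN1 : ((N : ℤ) + 1) = ((N + 1 : ℕ) : ℤ) := by push_cast; ring
    have hsum : (∑ j ∈ Finset.range (N+1), a ^ j * fourier (j:ℤ) x)
        = ∑ j ∈ Finset.range (N+1), (a * fourier 1 x) ^ j :=
      Finset.sum_congr rfl (fun j _ => hw j)
    rw [hN1, hsum]
    have hgeom := geom_sum_mul (a * fourier 1 x) (N + 1)
    have hw2 : a ^ (N+1) * fourier ((N+1 : ℕ) : ℤ) x = (a * fourier 1 x)^(N+1) := hw (N+1)
    linear_combination hgeom - a^(N+1) * (fourier ((N+1:ℕ):ℤ) x) * hinv - hw2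
  have key : ∀ N : ℕ, fourierCoeff G k =
      (∑ j ∈ Finset.range (N + 1), a ^ j * (if k = (j : ℤ) then 1 else 0))
        + a ^ (N + 1) * fourierCoeff (fun x => fourier ((N : ℤ) + 1) x * G x) k := by
    intro N
    have hint1 : ∀ j : ℕ, Integrable (fun x : 𝕋 => fourier (-k) x • (a ^ j * fourier (j:ℤ) x)) μT := by
      intro j
      exact cont_integrable (((fourier (-k)).continuous).smul
        (continuous_const.mul (fourier (j:ℤ)).continuous))
    have hint2 : Integrable
        (fun x : 𝕋 => fourier (-k) x • (a ^ (N+1) * (fourier ((N:ℤ)+1) x * G x))) μT :=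
      cont_integrable (((fourier (-k)).continuous).smul
        (continuous_const.mul ((fourier ((N:ℤ)+1)).continuous.mul hGcont)))
    have e1 : fourierCoeff G k = ∫ x : 𝕋, fourier (-k) x •
        ((∑ j ∈ Finset.range (N + 1), a ^ j * fourier (j : ℤ) x)
          + a ^ (N + 1) * (fourier ((N : ℤ) + 1) x * G x)) ∂μT := by
      unfold fourierCoeff
      apply integral_congr_ae
      apply Filter.Eventually.of_forall
      intro x
      dsimp only
      rw [← hGx N x]
    rw [e1]
    have e2 : ∀ x : 𝕋, fourier (-k) x •
        ((∑ j ∈ Finset.range (N + 1), a ^ j * fourier (j : ℤ) x)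
          + a ^ (N + 1) * (fourier ((N : ℤ) + 1) x * G x))
        = (∑ j ∈ Finset.range (N + 1), fourier (-k) x • (a ^ j * fourier (j : ℤ) x))
          + fourier (-k) x • (a ^ (N+1) * (fourier ((N:ℤ)+1) x * G x)) := by
      intro x
      rw [smul_add, Finset.smul_sum]
    simp_rw [e2]
    rw [integral_add (integrable_finset_sum _ (fun j _ => hint1 j)) hint2,
      integral_finset_sum _ (fun j _ => hint1 j)]
    congr 1
    · apply Finset.sum_congr rfl
      intro j _
      have : ∀ x : 𝕋, fourier (-k) x • (a ^ j * fourier (j:ℤ) x)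
          = a ^ j * (fourier (-k) x • fourier (j:ℤ) x) := by
        intro x; simp [smul_eq_mul]; ring
      simp_rw [this]
      rw [integral_const_mul]
      congr 1
      exact (fourierCoeff_fourier (j : ℤ) k).symm ▸ rfl
    · have : ∀ x : 𝕋, fourier (-k) x • (a ^ (N+1) * (fourier ((N:ℤ)+1) x * G x))
          = a ^ (N+1) * (fourier (-k) x • (fourier ((N:ℤ)+1) x * G x)) := by
        intro x; simp [smul_eq_mul]; ring
      simp_rw [this]
      rw [integral_const_mul]
      rfl
  -- evaluate the finite sum for large N
  have hsum_eval : ∀ N : ℕ, k.toNat ≤ N →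
      (∑ j ∈ Finset.range (N + 1), a ^ j * (if k = (j : ℤ) then 1 else 0))
        = if 0 ≤ k then a ^ k.toNat else 0 := by
    intro N hN
    by_cases hk : 0 ≤ k
    · have : ∀ j ∈ Finset.range (N + 1),
          a ^ j * (if k = (j : ℤ) then 1 else 0) = if j = k.toNat then a ^ j else 0 := by
        intro j _
        by_cases hj : k = (j : ℤ)
        · have h2 : j = k.toNat := by omega
          rw [if_pos hj, if_pos h2, mul_one]
        · have h2 : j ≠ k.toNat := by omega
          rw [if_neg hj, if_neg h2, mul_zero]
      rw [Finset.sum_congr rfl this, Finset.sum_ite_eq' (Finset.range (N+1)) k.toNat]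
      simp [Finset.mem_range, Nat.lt_succ_of_le hN, hk]
    · have : ∀ j ∈ Finset.range (N + 1),
          a ^ j * (if k = (j : ℤ) then 1 else 0) = 0 := by
        intro j _
        have : k ≠ (j : ℤ) := by omega
        simp [this]
      rw [Finset.sum_congr rfl this]
      simp [hk]
  -- bound the remainder
  have hrem : ∀ N : ℕ,
      ‖fourierCoeff (fun x => fourier ((N : ℤ) + 1) x * G x) k‖ ≤ (1 - ‖a‖)⁻¹ := by
    intro N
    apply norm_fourierCoeff_le
    intro x
    rw [norm_mul, norm_fourier_one'', one_mul]
    exact norm_geom_le ha x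
  have hdiff : ∀ N : ℕ, k.toNat ≤ N →
      ‖fourierCoeff G k - (if 0 ≤ k then a ^ k.toNat else 0)‖
        ≤ (1 - ‖a‖)⁻¹ * ‖a‖ ^ (N + 1) := by
    intro N hN
    rw [key N, hsum_eval N hN]
    rw [add_sub_cancel_left]
    rw [norm_mul, norm_pow]
    rw [mul_comm]
    exact mul_le_mul_of_nonneg_right (hrem N) (by positivity)
  have htend : Filter.Tendsto (fun N : ℕ => (1 - ‖a‖)⁻¹ * ‖a‖ ^ (N + 1))
      Filter.atTop (nhds 0) := by
    have h1 : Filter.Tendsto (fun N : ℕ => ‖a‖ ^ N) Filter.atTop (nhds 0) :=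
      tendsto_pow_atTop_nhds_zero_of_lt_one (norm_nonneg a) ha
    have h2 := (h1.comp (Filter.tendsto_add_atTop_nat 1)).const_mul ((1 - ‖a‖)⁻¹)
    simpa using h2
  have : ‖fourierCoeff G k - (if 0 ≤ k then a ^ k.toNat else 0)‖ ≤ 0 := by
    apply ge_of_tendsto htend
    filter_upwards [Filter.eventually_atTop.mpr ⟨k.toNat, fun N hN => hdiff N hN⟩] with N h
    exact h
  have := norm_le_zero_iff.mp this
  exact sub_eq_zero.mp this
lemma kernelCM_fun_eq (z : unitDisk) :
    (kernelCM z : 𝕋 → ℂ) = fun x =>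
      ((Real.sqrt (1 - ‖(z : ℂ)‖ ^ 2) : ℝ) : ℂ) * ((1 : ℂ) - conj (z : ℂ) * fourier 1 x)⁻¹ :=
  funext fun x => div_eq_mul_inv _ _

lemma fourierCoeff_kernelCM (z : unitDisk) (k : ℤ) :
    fourierCoeff (kernelCM z : 𝕋 → ℂ) k
      = if 0 ≤ k then ((Real.sqrt (1 - ‖(z : ℂ)‖ ^ 2) : ℝ) : ℂ) * (conj (z : ℂ)) ^ k.toNat
        else 0 := by
  rw [kernelCM_fun_eq]
  rw [fourierCoeff.const_mul]
  rw [fourierCoeff_geom (by rw [RCLike.norm_conj]; exact norm_lt_one z) k]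
  by_cases hk : 0 ≤ k <;> simp [hk]

lemma kernelCM_mem_Hardy (z : unitDisk) :
    (ContinuousMap.toLp (E := ℂ) 2 μT ℂ (kernelCM z)) ∈ Hardy := by
  rw [mem_Hardy_iff]
  intro n hn
  rw [fourierCoeff_congr_ae (ContinuousMap.coeFn_toLp (p := 2) (μ := μT) (𝕜 := ℂ) (kernelCM z))]
  rw [fourierCoeff_kernelCM]
  simp [not_le.mpr hn]

lemma ι_kernel (z : unitDisk) :
    (ι (kernel z) : L2) = ContinuousMap.toLp (E := ℂ) 2 μT ℂ (kernelCM z) := by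
  show ((P (ContinuousMap.toLp (E := ℂ) 2 μT ℂ (kernelCM z)) : Hardy) : L2) = _
  exact Submodule.starProjection_eq_self_iff.mpr (kernelCM_mem_Hardy z)

lemma coeff_kernel (z : unitDisk) (k : ℤ) :
    fourierCoeff ((ι (kernel z) : L2) : 𝕋 → ℂ) k
      = if 0 ≤ k then ((Real.sqrt (1 - ‖(z : ℂ)‖ ^ 2) : ℝ) : ℂ) * (conj (z : ℂ)) ^ k.toNat
        else 0 := by
  rw [ι_kernel]
  rw [fourierCoeff_congr_ae (ContinuousMap.coeFn_toLp (p := 2) (μ := μT) (𝕜 := ℂ) (kernelCM z))]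
  exact fourierCoeff_kernelCM z k

lemma coe_conjD (z : unitDisk) : ((conjD z : unitDisk) : ℂ) = conj (z : ℂ) := rfl

lemma coeff_kernel_conjD (z : unitDisk) (k : ℤ) :
    fourierCoeff ((ι (kernel (conjD z)) : L2) : 𝕋 → ℂ) k
      = if 0 ≤ k then ((Real.sqrt (1 - ‖(z : ℂ)‖ ^ 2) : ℝ) : ℂ) * (z : ℂ) ^ k.toNat
        else 0 := by
  rw [coeff_kernel]
  rw [coe_conjD, RCLike.norm_conj, Complex.conj_conj]
lemma coeFn_mul_of {f : 𝕋 → ℂ} (hf : MemLp f ⊤ μT) (g : L2) :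
    ((mul f g : L2) : 𝕋 → ℂ) =ᵐ[μT] fun x => f x * (g : 𝕋 → ℂ) x := by
  have he : mul f g = (memLp_smul hf g).toLp (f • (g : 𝕋 → ℂ)) := by
    rw [mul, dif_pos hf]; rfl
  rw [he]
  filter_upwards [MemLp.coeFn_toLp (memLp_smul hf g)] with x hx
  simpa using hx

lemma coeFn_compNeg' (g : L2) :
    ((compNeg g : L2) : 𝕋 → ℂ) =ᵐ[μT] fun x => (g : 𝕋 → ℂ) (-x) := by
  have he : compNeg g = (memLp_compNeg g).toLp ((g : 𝕋 → ℂ) ∘ (Neg.neg : 𝕋 → 𝕋)) := rfl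
  rw [he]
  filter_upwards [MemLp.coeFn_toLp (memLp_compNeg g)] with x hx
  simpa using hx

lemma memLp_top_fourier (n : ℤ) : MemLp (fun x : 𝕋 => (fourier n x : ℂ)) ⊤ μT :=
  memLp_top_of_bound (map_continuous (fourier n)).aestronglyMeasurable 1
    (Filter.Eventually.of_forall fun x => le_of_eq (norm_fourier_one'' n x))

lemma mobius_continuous (z : unitDisk) : Continuous (mobius z) :=
  (continuous_const.sub (map_continuous (fourier 1))).div
    (continuous_const.sub (continuous_const.mul (map_continuous (fourier 1))))
    (denom_ne_zero z)

lemma memLp_conjF_of_continuous {f : 𝕋 → ℂ} (hf : Continuous f) : MemLp f ⊤ μT := by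
  obtain ⟨C, hC⟩ := (isCompact_univ (X := 𝕋)).exists_bound_of_continuousOn hf.continuousOn
  exact memLp_top_of_bound hf.aestronglyMeasurable C
    (Filter.Eventually.of_forall fun x => hC x (Set.mem_univ x))

lemma memLp_conjF_mobius (z : unitDisk) : MemLp (conjF (mobius z)) ⊤ μT :=
  memLp_conjF_of_continuous (Complex.continuous_conj.comp (mobius_continuous z))

lemma integrable_mul_L2 {φ : 𝕋 → ℂ} (hφc : Continuous φ) (g : L2) :
    Integrable (fun y => φ y * (g : 𝕋 → ℂ) y) μT := by
  obtain ⟨C, hC⟩ := (isCompact_univ (X := 𝕋)).exists_bound_of_continuousOn hφc.continuousOn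
  exact Integrable.bdd_mul ((Lp.memLp g).integrable one_le_two) hφc.aestronglyMeasurable
    (c := C) (Filter.Eventually.of_forall fun x => hC x (Set.mem_univ x))

lemma integral_fourier_mul_hardy (h : Hardy) {j : ℤ} (hj : 0 < j) :
    ∫ y : 𝕋, fourier j y * ((ι h : L2) : 𝕋 → ℂ) y ∂μT = 0 := by
  have e : fourierCoeff ((ι h : L2) : 𝕋 → ℂ) (-j)
      = ∫ y : 𝕋, fourier j y * ((ι h : L2) : 𝕋 → ℂ) y ∂μT := by
    unfold fourierCoeff
    apply integral_congr_ae
    filter_upwards with y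
    rw [neg_neg, smul_eq_mul]
  rw [← e]
  exact hardy_coeff_eq_zero h (by omega)

lemma fourier_apply_neg (n : ℤ) (x : 𝕋) : fourier n (-x) = fourier (-n) x := by
  rw [fourier_apply, smul_neg, fourier_neg', ← fourier_neg]
lemma mobius_decomp (z : unitDisk) (M : ℕ) (y : 𝕋) :
    fourier ((M : ℤ) + 1) y * conjF (mobius z) y
      = conj (z : ℂ) * fourier ((M : ℤ) + 1) y
        + ((z : ℂ) * conj (z : ℂ) - 1) *
            (fourier 1 y * ∑ i ∈ Finset.range M, (fourier 1 y : ℂ) ^ i * (z : ℂ) ^ (M - 1 - i))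
        - ((Real.sqrt (1 - ‖(z : ℂ)‖ ^ 2) : ℝ) : ℂ) * (z : ℂ) ^ M * conj (kernelCM z y) := by
  set u : ℂ := fourier 1 y with hu
  have hnu : ‖u‖ = 1 := norm_fourier_one y
  have huv : u * conj u = 1 := by
    rw [Complex.mul_conj]
    norm_cast
    rw [Complex.normSq_eq_norm_sq, hnu, one_pow]
  have hden : (1 : ℂ) - (z : ℂ) * conj u ≠ 0 := by
    intro hcon
    have h1 : (1 : ℂ) = (z : ℂ) * conj u := sub_eq_zero.mp hcon
    have h2 : (1 : ℝ) = ‖(z : ℂ)‖ * ‖conj u‖ := by rw [← norm_mul, ← h1, norm_one]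
    rw [RCLike.norm_conj, hnu, mul_one] at h2
    exact absurd h2.symm (ne_of_lt (norm_lt_one z))
  have hfour : (fourier ((M : ℤ) + 1) y : ℂ) = u ^ (M + 1) := by
    have hc : ((M : ℤ) + 1) = ((M + 1 : ℕ) : ℤ) := by push_cast; ring
    rw [hc, ← fourier_one_pow]
  have hconjf : conjF (mobius z) y = (conj (z : ℂ) - conj u) / (1 - (z : ℂ) * conj u) := by
    show conj (((z : ℂ) - u) / (1 - conj (z : ℂ) * u)) = _
    rw [map_div₀, map_sub, map_sub, map_one, map_mul, Complex.conj_conj]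
  have hker : conj (kernelCM z y)
      = ((Real.sqrt (1 - ‖(z : ℂ)‖ ^ 2) : ℝ) : ℂ) / (1 - (z : ℂ) * conj u) := by
    show conj ((((Real.sqrt (1 - ‖(z : ℂ)‖ ^ 2) : ℝ) : ℂ)) / (1 - conj (z : ℂ) * u)) = _
    rw [map_div₀, map_sub, map_one, map_mul, Complex.conj_conj, Complex.conj_ofReal]
  have hsq : ((Real.sqrt (1 - ‖(z : ℂ)‖ ^ 2) : ℝ) : ℂ)
        * ((Real.sqrt (1 - ‖(z : ℂ)‖ ^ 2) : ℝ) : ℂ) = 1 - (z : ℂ) * conj (z : ℂ) := by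
    rw [← Complex.ofReal_mul,
      Real.mul_self_sqrt (by nlinarith [norm_lt_one z, norm_nonneg (z : ℂ)])]
    rw [Complex.mul_conj]
    norm_cast
    rw [Complex.normSq_eq_norm_sq]
  have hgeom := geom_sum₂_mul u (z : ℂ) M
  rw [hfour, hconjf, hker]
  have hden' : (1 : ℂ) - conj u * (z : ℂ) ≠ 0 := by rwa [mul_comm]
  field_simp
  linear_combination (((z : ℂ) * conj (z : ℂ) - 1) * (u ^ M + (z : ℂ)
      * ∑ i ∈ Finset.range M, u ^ i * (z : ℂ) ^ (M - 1 - i))) * huv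
    - ((z : ℂ) * conj (z : ℂ) - 1) * hgeom + (z : ℂ) ^ M * hsq
/-- `H_{φ̄_z} = −(k_{z̄} ⊗ k_z)` for every `z ∈ 𝔻`. -/
theorem hankel_conj_mobius_eq_neg_rankOne (z : unitDisk) :
    Hankel (conjF (mobius z)) = -rankOne (kernel (conjD z)) (kernel z) := by
  apply ContinuousLinearMap.ext
  intro h
  apply hardy_ext
  intro m
  set sq : ℂ := ((Real.sqrt (1 - ‖(z : ℂ)‖ ^ 2) : ℝ) : ℂ) with hsqdef
  have hRop : (((-rankOne (kernel (conjD z)) (kernel z)) h : Hardy) : L2)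
      = -((inner (𝕜 := ℂ) (kernel z) h : ℂ) • (ι (kernel (conjD z)) : L2)) := by
    simp only [ContinuousLinearMap.neg_apply, rankOne, ContinuousLinearMap.smulRight_apply,
      innerSL_apply_apply]
    rfl
  have hR : fourierCoeff ((((-rankOne (kernel (conjD z)) (kernel z)) h : Hardy) : L2) : 𝕋 → ℂ) m
      = -((inner (𝕜 := ℂ) (kernel z) h : ℂ)
          * fourierCoeff ((ι (kernel (conjD z)) : L2) : 𝕋 → ℂ) m) := by
    rw [← fourierBasis_repr, hRop, map_neg, LinearIsometryEquiv.map_smul, lp.coeFn_neg, Pi.neg_apply,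
      lp.coeFn_smul, Pi.smul_apply, smul_eq_mul, fourierBasis_repr]
  by_cases hm : 0 ≤ m
  · obtain ⟨M, hM⟩ : ∃ M : ℕ, m = (M : ℤ) := ⟨m.toNat, (Int.toNat_of_nonneg hm).symm⟩
    subst hM
    set f : 𝕋 → ℂ := conjF (mobius z) with hfdef
    set hfn : 𝕋 → ℂ := ((ι h : L2) : 𝕋 → ℂ) with hfndef
    have hfl : MemLp f ⊤ μT := memLp_conjF_mobius z
    have hae2 : ((compNeg (mul f (ι h)) : L2) : 𝕋 → ℂ) =ᵐ[μT] fun x => f (-x) * hfn (-x) := by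
      filter_upwards [coeFn_compNeg' (mul f (ι h)),
        negMP.quasiMeasurePreserving.ae_eq_comp (coeFn_mul_of hfl (ι h))] with x h1 h2
      rw [h1]
      exact h2
    have hae3 : ((Uop (mul f (ι h)) : L2) : 𝕋 → ℂ)
        =ᵐ[μT] fun x => fourier (-1) x * (f (-x) * hfn (-x)) := by
      have h0 : (Uop (mul f (ι h)) : L2)
          = mul (fun x => (fourier (-1) x : ℂ)) (compNeg (mul f (ι h))) := rfl
      rw [h0]
      filter_upwards [coeFn_mul_of (memLp_top_fourier (-1)) (compNeg (mul f (ι h))),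
        hae2] with x h1 h2
      rw [h1, h2]
    have hL : fourierCoeff (((Hankel f h : Hardy) : L2) : 𝕋 → ℂ) (M : ℤ)
        = ∫ y : 𝕋, fourier ((M : ℤ) + 1) y * (f y * hfn y) ∂μT := by
      have h0 : ((Hankel f h : Hardy) : L2) = (ι (P (Uop (mul f (ι h)))) : L2) := rfl
      rw [h0, coeff_P_eq (by exact_mod_cast Int.ofNat_nonneg M),
        fourierCoeff_congr_ae hae3]
      unfold fourierCoeff
      rw [← MeasurePreserving.integral_comp negMP
        (MeasurableEquiv.neg 𝕋).measurableEmbedding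
        (fun y => fourier ((M : ℤ) + 1) y * (f y * hfn y))]
      apply integral_congr_ae
      filter_upwards with x
      show fourier (-(M : ℤ)) x • (fourier (-1) x * (f (-x) * hfn (-x)))
          = fourier ((M : ℤ) + 1) (-x) * (f (-x) * hfn (-x))
      rw [smul_eq_mul, ← mul_assoc, ← fourier_add, fourier_apply_neg]
      have hidx : (-(M : ℤ)) + -1 = -((M : ℤ) + 1) := by ring
      rw [hidx]
    -- continuity facts
    have hc1 : Continuous fun y : 𝕋 => (fourier ((M : ℤ) + 1) y : ℂ) :=
      map_continuous (fourier ((M : ℤ) + 1))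
    have hc2 : Continuous fun y : 𝕋 => ((fourier 1 y : ℂ)
        * ∑ i ∈ Finset.range M, (fourier 1 y : ℂ) ^ i * (z : ℂ) ^ (M - 1 - i)) := by
      apply (map_continuous (fourier 1)).mul
      apply continuous_finset_sum
      intro i _
      exact ((map_continuous (fourier 1)).pow i).mul continuous_const
    have hc3 : Continuous fun y : 𝕋 => conj (kernelCM z y) :=
      Complex.continuous_conj.comp (map_continuous (kernelCM z))
    have hi1 : Integrable (fun y : 𝕋 => fourier ((M : ℤ) + 1) y * hfn y) μT :=
      integrable_mul_L2 hc1 (ι h)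
    have hi2 : Integrable (fun y : 𝕋 => ((fourier 1 y : ℂ)
        * ∑ i ∈ Finset.range M, (fourier 1 y : ℂ) ^ i * (z : ℂ) ^ (M - 1 - i)) * hfn y) μT :=
      integrable_mul_L2 hc2 (ι h)
    have hi3 : Integrable (fun y : 𝕋 => conj (kernelCM z y) * hfn y) μT :=
      integrable_mul_L2 hc3 (ι h)
    have hsplit : ∫ y : 𝕋, fourier ((M : ℤ) + 1) y * (f y * hfn y) ∂μT
        = (∫ y : 𝕋, conj (z : ℂ) * (fourier ((M : ℤ) + 1) y * hfn y) ∂μT)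
          + (∫ y : 𝕋, ((z : ℂ) * conj (z : ℂ) - 1) * (((fourier 1 y : ℂ)
              * ∑ i ∈ Finset.range M, (fourier 1 y : ℂ) ^ i * (z : ℂ) ^ (M - 1 - i)) * hfn y) ∂μT)
          + (∫ y : 𝕋, (-(sq * (z : ℂ) ^ M)) * (conj (kernelCM z y) * hfn y) ∂μT) := by
      have e1 : (fun y : 𝕋 => fourier ((M : ℤ) + 1) y * (f y * hfn y))
          = fun y : 𝕋 => conj (z : ℂ) * (fourier ((M : ℤ) + 1) y * hfn y)
            + ((z : ℂ) * conj (z : ℂ) - 1) * (((fourier 1 y : ℂ)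
              * ∑ i ∈ Finset.range M, (fourier 1 y : ℂ) ^ i * (z : ℂ) ^ (M - 1 - i)) * hfn y)
            + (-(sq * (z : ℂ) ^ M)) * (conj (kernelCM z y) * hfn y) := by
        funext y
        have hd := mobius_decomp z M y
        calc fourier ((M : ℤ) + 1) y * (f y * hfn y)
            = (fourier ((M : ℤ) + 1) y * f y) * hfn y := by ring
          _ = _ := by rw [hd]; ring
      have hi12 : Integrable (fun y : 𝕋 => conj (z : ℂ) * (fourier ((M : ℤ) + 1) y * hfn y)
          + ((z : ℂ) * conj (z : ℂ) - 1) * (((fourier 1 y : ℂ)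
            * ∑ i ∈ Finset.range M, (fourier 1 y : ℂ) ^ i * (z : ℂ) ^ (M - 1 - i)) * hfn y)) μT :=
        (hi1.const_mul _).add (hi2.const_mul _)
      have hi3' : Integrable (fun y : 𝕋 => (-(sq * (z : ℂ) ^ M))
          * (conj (kernelCM z y) * hfn y)) μT := hi3.const_mul _
      rw [e1, integral_add hi12 hi3', integral_add (hi1.const_mul _) (hi2.const_mul _)]
    -- evaluate the three integrals
    have hT1 : ∫ y : 𝕋, conj (z : ℂ) * (fourier ((M : ℤ) + 1) y * hfn y) ∂μT = 0 := by
      rw [integral_const_mul, integral_fourier_mul_hardy h (by omega), mul_zero]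
    have hT2 : ∫ y : 𝕋, ((z : ℂ) * conj (z : ℂ) - 1) * (((fourier 1 y : ℂ)
        * ∑ i ∈ Finset.range M, (fourier 1 y : ℂ) ^ i * (z : ℂ) ^ (M - 1 - i)) * hfn y) ∂μT
        = 0 := by
      rw [integral_const_mul]
      have hpt : ∀ y : 𝕋, ((fourier 1 y : ℂ)
          * ∑ i ∈ Finset.range M, (fourier 1 y : ℂ) ^ i * (z : ℂ) ^ (M - 1 - i)) * hfn y
          = ∑ i ∈ Finset.range M, (z : ℂ) ^ (M - 1 - i)
              * (fourier ((i : ℤ) + 1) y * hfn y) := by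
        intro y
        rw [Finset.mul_sum, Finset.sum_mul]
        apply Finset.sum_congr rfl
        intro i _
        have hp : (fourier ((i : ℤ) + 1) y : ℂ) = (fourier 1 y : ℂ) ^ (i + 1) := by
          have hc : ((i : ℤ) + 1) = ((i + 1 : ℕ) : ℤ) := by push_cast; ring
          rw [hc, ← fourier_one_pow]
        rw [hp, pow_succ]
        ring
      simp_rw [hpt]
      have hint : ∀ i ∈ Finset.range M, Integrable
          (fun a : 𝕋 => (z : ℂ) ^ (M - 1 - i) * (fourier ((i : ℤ) + 1) a * hfn a)) μT :=
        fun i _ => (integrable_mul_L2 (map_continuous (fourier ((i : ℤ) + 1))) (ι h)).const_mul _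
      rw [integral_finset_sum _ hint]
      have hz : ∀ i ∈ Finset.range M,
          ∫ a : 𝕋, (z : ℂ) ^ (M - 1 - i) * (fourier ((i : ℤ) + 1) a * hfn a) ∂μT = 0 := by
        intro i _
        rw [integral_const_mul, integral_fourier_mul_hardy h (by omega), mul_zero]
      rw [Finset.sum_eq_zero hz, mul_zero]
    have hkfn : ((ι (kernel z) : L2) : 𝕋 → ℂ) =ᵐ[μT] (kernelCM z : 𝕋 → ℂ) := by
      rw [ι_kernel]
      exact ContinuousMap.coeFn_toLp (p := 2) (μ := μT) (𝕜 := ℂ) (kernelCM z)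
    have hinner : ∫ y : 𝕋, conj (kernelCM z y) * hfn y ∂μT
        = (inner (𝕜 := ℂ) (kernel z) h : ℂ) := by
      rw [Submodule.coe_inner, MeasureTheory.L2.inner_def]
      apply integral_congr_ae
      filter_upwards [hkfn] with y h1
      rw [RCLike.inner_apply']
      rw [show ((kernel z : L2) : 𝕋 → ℂ) y = kernelCM z y from h1]
      rfl
    have hT3 : ∫ y : 𝕋, (-(sq * (z : ℂ) ^ M)) * (conj (kernelCM z y) * hfn y) ∂μT
        = (-(sq * (z : ℂ) ^ M)) * (inner (𝕜 := ℂ) (kernel z) h : ℂ) := by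
      rw [integral_const_mul, hinner]
    rw [hL, hsplit, hT1, hT2, hT3, hR, coeff_kernel_conjD z (M : ℤ), if_pos (by positivity)]
    simp only [Int.toNat_natCast]
    ring
  · have hmneg : m < 0 := not_le.mp hm
    rw [hardy_coeff_eq_zero ((Hankel (conjF (mobius z))) h) hmneg, hR,
      coeff_kernel_conjD z m, if_neg hm, mul_zero, neg_zero]

end HTpaper
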